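/- Let η : [0,T] → ℝ be continuous and nonnegative, let B ≥ 0, A ≤ 0, C ≥ 0, D ≥ 0, and suppose η satisfies η' - B·η² - 2A·η + C = 0 with η(T) = D. Define l(t) = ∫₀ᵗ exp(-2B·∫ₛᵗ η(u) du) ds. Then ∫₀ᵀ B·η(t)²·l(t) dt ≤ ∫₀ᵀ η(t) dt. -/

import Mathlib

open Real Set

theorem stmt_15 (T A B C D : ℝ) (hT : 0 < T) (hB : 0 ≤ B) (hA : A ≤ 0)
    (hC : 0 ≤ C) (hD : 0 ≤ D) (η : ℝ → ℝ)
    (hηc : ContinuousOn η (Icc 0 T))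
    (hηn : ∀ t ∈ Icc (0 : ℝ) T, 0 ≤ η t)
    (hη : ∀ t ∈ Icc (0 : ℝ) T, HasDerivAt η (B * η t ^ 2 + 2 * A * η t - C) t)
    (hηT : η T = D)
    (l : ℝ → ℝ)
    (hl : ∀ t, l t = ∫ s in (0 : ℝ)..t, Real.exp (-2 * B * ∫ u in s..t, η u)) :
    ∫ t in (0 : ℝ)..T, B * η t ^ 2 * l t ≤ ∫ t in (0 : ℝ)..T, η t := by
  -- clamp function
  set c : ℝ → ℝ := fun t => max 0 (min t T) with hcdef
  have hcmem : ∀ t, c t ∈ Icc (0 : ℝ) T := fun t =>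
    ⟨le_max_left _ _, max_le hT.le (min_le_right _ _)⟩
  have hccont : Continuous c := continuous_const.max (continuous_id.min continuous_const)
  -- continuous extension of η
  set g : ℝ → ℝ := fun t => η (c t) with hgdef
  have hgc : Continuous g := hηc.comp_continuous hccont hcmem
  have hgeq : ∀ t ∈ Icc (0 : ℝ) T, g t = η t := by
    intro t ht
    have : c t = t := by
      simp only [hcdef]
      rw [min_eq_left ht.2, max_eq_right ht.1]
    simp [hgdef, this]
  -- primitive of g
  set F : ℝ → ℝ := fun t => ∫ u in (0 : ℝ)..t, g u with hFdef
  have hF : ∀ t, HasDerivAt F (g t) t := fun t => (hgc.integral_hasStrictDerivAt 0 t).hasDerivAt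
  have hFcont : Continuous F := by
    rw [continuous_iff_continuousAt]; exact fun t => (hF t).continuousAt
  set G : ℝ → ℝ := fun t => ∫ s in (0 : ℝ)..t, Real.exp (2 * B * F s) with hGdef
  have hGic : Continuous fun s => Real.exp (2 * B * F s) :=
    (continuous_const.mul hFcont).rexp
  have hG : ∀ t, HasDerivAt G (Real.exp (2 * B * F t)) t := fun t =>
    (hGic.integral_hasStrictDerivAt 0 t).hasDerivAt
  set L : ℝ → ℝ := fun t => Real.exp (-(2 * B) * F t) * G t with hLdef
  have hLcont : Continuous L := (continuous_const.mul hFcont).rexp.mul (by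
    rw [continuous_iff_continuousAt]; exact fun t => (hG t).continuousAt)
  have hL : ∀ t, HasDerivAt L (-(2 * B) * g t * L t + 1) t := by
    intro t
    have h1 : HasDerivAt (fun t => Real.exp (-(2 * B) * F t))
        (Real.exp (-(2 * B) * F t) * (-(2 * B) * g t)) t := ((hF t).const_mul (-(2 * B))).exp
    have := h1.mul (hG t)
    convert this using 1
    iterate 3 rfl
    have : Real.exp (-(2 * B) * F t) * Real.exp (2 * B * F t) = 1 := by
      rw [← Real.exp_add]; ring_nf; exact Real.exp_zero
    simp only [hLdef]
    nlinarith [this]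
  -- l = L on [0,T]
  have hlL : ∀ t ∈ Icc (0 : ℝ) T, l t = L t := by
    intro t ht
    rw [hl t]
    have huIcc : uIcc (0 : ℝ) t = Icc 0 t := uIcc_of_le ht.1
    have hsub : Icc (0 : ℝ) t ⊆ Icc 0 T := Icc_subset_Icc le_rfl ht.2
    have hstep : ∀ s ∈ uIcc (0 : ℝ) t,
        Real.exp (-2 * B * ∫ u in s..t, η u)
          = Real.exp (-(2 * B) * F t) * Real.exp (2 * B * F s) := by
      intro s hs
      rw [huIcc] at hs
      have hs' : s ∈ Icc (0 : ℝ) T := hsub hs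
      have hcongr : (∫ u in s..t, η u) = ∫ u in s..t, g u := by
        refine intervalIntegral.integral_congr fun u hu => ?_
        have huIcc2 : uIcc s t ⊆ Icc (0 : ℝ) T := by
          rw [uIcc_of_le hs.2]
          exact Icc_subset_Icc hs'.1 ht.2
        exact (hgeq u (huIcc2 hu)).symm
      have hFt : (∫ u in s..t, g u) = F t - F s := by
        simp only [hFdef]
        rw [eq_sub_iff_add_eq, add_comm,
          intervalIntegral.integral_add_adjacent_intervals
            (hgc.intervalIntegrable 0 s) (hgc.intervalIntegrable s t)]
      rw [hcongr, hFt, ← Real.exp_add]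
      ring_nf
    rw [intervalIntegral.integral_congr hstep, intervalIntegral.integral_const_mul]
  have hL0 : L 0 = 0 := by simp [hLdef, hGdef]
  have hLnn : ∀ t ∈ Icc (0 : ℝ) T, 0 ≤ L t := by
    intro t ht
    apply mul_nonneg (Real.exp_pos _).le
    exact intervalIntegral.integral_nonneg ht.1 fun u _ => (Real.exp_pos _).le
  -- integration by parts via FTC on P = η * L
  set ψ : ℝ → ℝ := fun t => -(B * η t ^ 2 * L t) + (2 * A * η t * L t - C * L t) + η t
    with hψdef
  have hψcont : ContinuousOn ψ (Icc 0 T) := by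
    apply ContinuousOn.add
    apply ContinuousOn.add
    · exact (((continuousOn_const.mul (hηc.pow 2)).mul hLcont.continuousOn).neg)
    · exact ((continuousOn_const.mul hηc).mul hLcont.continuousOn).sub
        (continuousOn_const.mul hLcont.continuousOn)
    · exact hηc
  have hψint : IntervalIntegrable ψ MeasureTheory.volume 0 T := by
    apply ContinuousOn.intervalIntegrable
    rwa [uIcc_of_le hT.le]
  have hPcont : ContinuousOn (fun t => η t * L t) (Icc 0 T) := hηc.mul hLcont.continuousOn
  have hP : ∀ t ∈ Ioo (0 : ℝ) T, HasDerivAt (fun t => η t * L t) (ψ t) t := by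
    intro t ht
    have ht' : t ∈ Icc (0 : ℝ) T := Ioo_subset_Icc_self ht
    have := (hη t ht').mul (hL t)
    rw [hgeq t ht'] at this
    convert this using 1
    iterate 3 rfl
    simp only [hψdef]
    ring
  have hFTC : (∫ t in (0 : ℝ)..T, ψ t) = η T * L T - η 0 * L 0 := by
    exact intervalIntegral.integral_eq_sub_of_hasDeriv_right_of_le hT.le hPcont
      (fun x hx => (hP x hx).hasDerivWithinAt) hψint
  -- integrability of pieces
  have hi1 : IntervalIntegrable (fun t => B * η t ^ 2 * L t) MeasureTheory.volume 0 T := by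
    apply ContinuousOn.intervalIntegrable
    rw [uIcc_of_le hT.le]
    exact (continuousOn_const.mul (hηc.pow 2)).mul hLcont.continuousOn
  have hi2 : IntervalIntegrable (fun t => 2 * A * η t * L t - C * L t)
      MeasureTheory.volume 0 T := by
    apply ContinuousOn.intervalIntegrable
    rw [uIcc_of_le hT.le]
    exact ((continuousOn_const.mul hηc).mul hLcont.continuousOn).sub
      (continuousOn_const.mul hLcont.continuousOn)
  have hi3 : IntervalIntegrable η MeasureTheory.volume 0 T := by
    apply ContinuousOn.intervalIntegrable
    rwa [uIcc_of_le hT.le]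
  have hi1' : IntervalIntegrable (fun t => -(B * η t ^ 2 * L t)) MeasureTheory.volume 0 T :=
    hi1.neg
  have hi12 : IntervalIntegrable
      (fun t => -(B * η t ^ 2 * L t) + (2 * A * η t * L t - C * L t))
      MeasureTheory.volume 0 T := hi1'.add hi2
  have hsplit : (∫ t in (0 : ℝ)..T, ψ t)
      = -(∫ t in (0 : ℝ)..T, B * η t ^ 2 * L t)
        + (∫ t in (0 : ℝ)..T, 2 * A * η t * L t - C * L t)
        + ∫ t in (0 : ℝ)..T, η t := by
    simp only [hψdef]
    rw [intervalIntegral.integral_add hi12 hi3, intervalIntegral.integral_add hi1' hi2,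
      intervalIntegral.integral_neg]
  have hmid : (∫ t in (0 : ℝ)..T, 2 * A * η t * L t - C * L t) ≤ 0 := by
    have : (0:ℝ) ≤ ∫ t in (0 : ℝ)..T, -(2 * A * η t * L t - C * L t) := by
      apply intervalIntegral.integral_nonneg hT.le
      intro u hu
      have h1 := hηn u hu
      have h2 := hLnn u hu
      nlinarith [mul_nonneg (mul_nonneg (neg_nonneg.2 hA) h1) h2, mul_nonneg hC h2]
    rw [intervalIntegral.integral_neg] at this
    linarith
  have hend : 0 ≤ η T * L T := by
    rw [hηT]
    exact mul_nonneg hD (hLnn T ⟨hT.le, le_rfl⟩)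
  have hmain : (∫ t in (0 : ℝ)..T, B * η t ^ 2 * L t) ≤ ∫ t in (0 : ℝ)..T, η t := by
    rw [hsplit, hL0] at hFTC
    linarith
  have hfinal : (∫ t in (0 : ℝ)..T, B * η t ^ 2 * l t)
      = ∫ t in (0 : ℝ)..T, B * η t ^ 2 * L t := by
    refine intervalIntegral.integral_congr fun t ht => ?_
    rw [uIcc_of_le hT.le] at ht
    rw [hlL t ht]
  rw [hfinal]
  exact hmain
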